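/- Theorem 2, Hoeffding concentration with covariate adjustment: in the setting of Theorem 2 (sharp null Y i true = Y i false for all i; deterministic imputation G and adjustment model H; residuals res z ystar := fun i => G z ystar i - H (G z ystar) i; statistic T; observed assignment z₀; t := T z₀ (res z₀ (Ystar z₀)); exact p-value p_adj := (𝒫.toMeasure {z | T z (res z (Ystar z)) ≥ t}).toReal; Monte Carlo p-value p̂_adj L := (1/L) * ∑_{l=0}^{L-1} indicator {ω | T (Z l ω) (res (Z l ω) (Ystar z₀)) ≥ t}), for every ε > 0 and every L ≥ 1 one has μ {ω | |p̂_adj L ω - p_adj| ≥ ε} ≤ ENNReal.ofReal (2 * Real.exp (-2 * L * ε^2)). -/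

import Mathlib

open MeasureTheory ProbabilityTheory Filter

/-- Hoeffding's lemma for a Bernoulli(p) random variable (scalar form). -/
lemma bernoulli_mgf_le' {p : ℝ} (hp0 : 0 ≤ p) (hp1 : p ≤ 1) (s : ℝ) :
    1 - p + p * Real.exp s ≤ Real.exp (p * s + s ^ 2 / 8) := by
  have hd : ∀ x : ℝ, 0 < 1 - p + p * Real.exp x := by
    intro x
    rcases hp0.eq_or_lt with h | h
    · simp [← h]
    · exact add_pos_of_nonneg_of_pos (sub_nonneg.2 hp1) (mul_pos h (Real.exp_pos x))
  have hD : ∀ x : ℝ, HasDerivAt (fun x => 1 - p + p * Real.exp x) (p * Real.exp x) x := by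
    intro x
    simpa using ((Real.hasDerivAt_exp x).const_mul p).const_add (1 - p)
  set g : ℝ → ℝ := fun x => Real.log (1 - p + p * Real.exp x) with hgdef
  have hg : ∀ x : ℝ, HasDerivAt g (p * Real.exp x / (1 - p + p * Real.exp x)) x :=
    fun x => (hD x).log (hd x).ne'
  set φ : ℝ → ℝ := fun x => p * Real.exp x / (1 - p + p * Real.exp x) with hφdef
  set φ' : ℝ → ℝ := fun x =>
    (p * Real.exp x * (1 - p + p * Real.exp x) - p * Real.exp x * (p * Real.exp x)) /
      (1 - p + p * Real.exp x) ^ 2 with hφ'def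
  have hφ : ∀ x : ℝ, HasDerivAt φ (φ' x) x := by
    intro x
    exact ((Real.hasDerivAt_exp x).const_mul p).div (hD x) (hd x).ne'
  have hφ'le : ∀ x : ℝ, φ' x ≤ 1 / 4 := by
    intro x
    rw [hφ'def]
    rw [div_le_iff₀ (pow_pos (hd x) 2)]
    nlinarith [sq_nonneg ((1 - p + p * Real.exp x) - 2 * (p * Real.exp x)), hd x]
  set h : ℝ → ℝ := fun x => p * x + x ^ 2 / 8 - g x with hhdef
  set h' : ℝ → ℝ := fun x => p + x / 4 - φ x with hh'def
  have hh : ∀ x : ℝ, HasDerivAt h (h' x) x := by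
    intro x
    have h1 : HasDerivAt (fun x : ℝ => p * x + x ^ 2 / 8) (p + x / 4) x := by
      have := ((hasDerivAt_id x).const_mul p).add ((hasDerivAt_pow 2 x).div_const 8)
      exact this.congr_deriv (by ring)
    exact h1.sub (hg x)
  have hh' : ∀ x : ℝ, HasDerivAt h' (1 / 4 - φ' x) x := by
    intro x
    have h1 : HasDerivAt (fun x : ℝ => p + x / 4) (1 / 4) x := by
      exact ((hasDerivAt_const x p).add ((hasDerivAt_id x).div_const 4)).congr_deriv (by norm_num)
    exact h1.sub (hφ x)
  have hmono : Monotone h' := by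
    apply monotone_of_deriv_nonneg (fun x => (hh' x).differentiableAt)
    intro x
    rw [(hh' x).deriv]
    linarith [hφ'le x]
  have hφ0 : φ 0 = p := by simp [hφdef]
  have hh'0 : h' 0 = 0 := by simp [hh'def, hφ0]
  have hderivh : ∀ x : ℝ, deriv h x = h' x := fun x => (hh x).deriv
  have hcont : Continuous h := by
    have : Differentiable ℝ h := fun x => (hh x).differentiableAt
    exact this.continuous
  have hmon2 : MonotoneOn h (Set.Ici (0 : ℝ)) := by
    apply monotoneOn_of_deriv_nonneg (convex_Ici 0) hcont.continuousOn
      (fun x _ => (hh x).differentiableAt.differentiableWithinAt)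
    intro x hx
    rw [interior_Ici] at hx
    rw [hderivh, ← hh'0]
    exact hmono (le_of_lt hx)
  have hant : AntitoneOn h (Set.Iic (0 : ℝ)) := by
    apply antitoneOn_of_deriv_nonpos (convex_Iic 0) hcont.continuousOn
      (fun x _ => (hh x).differentiableAt.differentiableWithinAt)
    intro x hx
    rw [interior_Iic] at hx
    rw [hderivh, ← hh'0]
    exact hmono (le_of_lt hx)
  have hh0 : h 0 = 0 := by
    have h1 : (1 : ℝ) - p + p * Real.exp 0 = 1 := by simp
    simp [hhdef, hgdef, h1]
  have hhs : 0 ≤ h s := by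
    rcases le_total 0 s with hs | hs
    · rw [← hh0]; exact hmon2 Set.self_mem_Ici hs hs
    · rw [← hh0]; exact hant hs Set.self_mem_Iic hs
  have hlog : Real.log (1 - p + p * Real.exp s) ≤ p * s + s ^ 2 / 8 := by
    have := hhs
    simp only [hhdef, hgdef] at this
    linarith
  exact (Real.log_le_iff_le_exp (hd s)).mp hlog

/-- One-sided Chernoff/Hoeffding bound for sums of independent variables whose mgf is
bounded by `exp (s² / 8)`. -/
lemma chernoff_upper_aux {Ω' : Type*} [MeasurableSpace Ω'] (μ : Measure Ω')
    [IsProbabilityMeasure μ]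
    (W : ℕ → Ω' → ℝ) (hmeas : ∀ l, Measurable (W l))
    (hindep : iIndepFun W μ)
    (hint : ∀ l (s : ℝ), Integrable (fun ω => Real.exp (s * W l ω)) μ)
    (hmgf : ∀ l (s : ℝ), ProbabilityTheory.mgf (W l) μ s ≤ Real.exp (s ^ 2 / 8))
    {ε : ℝ} (hε : 0 < ε) (L : ℕ) :
    (μ {ω | (L : ℝ) * ε ≤ (∑ l ∈ Finset.range L, W l) ω}).toReal
      ≤ Real.exp (-2 * L * ε ^ 2) := by
  have h4 : (0:ℝ) ≤ 4 * ε := by linarith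
  have hintS : Integrable (fun ω => Real.exp ((4*ε) * (∑ l ∈ Finset.range L, W l) ω)) μ :=
    hindep.integrable_exp_mul_sum hmeas (fun l _ => hint l _)
  have h1 := measure_ge_le_exp_mul_mgf (X := ∑ l ∈ Finset.range L, W l) (μ := μ)
    ((L:ℝ)*ε) h4 hintS
  have h2 : mgf (∑ l ∈ Finset.range L, W l) μ (4*ε) ≤ Real.exp (L * (2 * ε^2)) := by
    rw [hindep.mgf_sum hmeas]
    calc ∏ l ∈ Finset.range L, mgf (W l) μ (4*ε)
        ≤ ∏ l ∈ Finset.range L, Real.exp ((4*ε)^2/8) :=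
          Finset.prod_le_prod (fun l _ => mgf_nonneg) (fun l _ => hmgf l _)
      _ = Real.exp (L * ((4*ε)^2/8)) := by
          rw [Finset.prod_const, Finset.card_range, ← Real.exp_nat_mul]
      _ = Real.exp (L * (2*ε^2)) := by congr 1; ring
  refine h1.trans ?_
  calc Real.exp (-(4*ε) * ((L:ℝ)*ε)) * mgf (∑ l ∈ Finset.range L, W l) μ (4*ε)
      ≤ Real.exp (-(4*ε) * ((L:ℝ)*ε)) * Real.exp (L * (2*ε^2)) :=
        mul_le_mul_of_nonneg_left h2 (Real.exp_pos _).le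
    _ = Real.exp (-2 * L * ε^2) := by rw [← Real.exp_add]; congr 1; ring

/-- Theorem 2, Hoeffding concentration with covariate adjustment. -/
theorem theorem2_hoeffding_covariate_adjustment
    {Ω : Type*} [Fintype Ω] [Nonempty Ω] [MeasurableSpace Ω] [MeasurableSingletonClass Ω]
    {I : Type*} [Fintype I]
    {Ω' : Type*} [MeasurableSpace Ω'] (μ : Measure Ω') [IsProbabilityMeasure μ]
    (P : PMF Ω)                       -- randomization distribution (Assumption 1)
    (arm : Ω → I → Bool)              -- treatment arm of each unit under each assignment
    (Y : I → Bool → ℝ)                -- fixed potential outcomes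
    (η : (I → ℝ) → (I → Bool))        -- missingness mechanism (Assumption 2)
    (Yobs : Ω → I → ℝ)
    (hYobs : ∀ z i, Yobs z i = Y i (arm z i))
    (Mis : Ω → I → Bool)
    (hMis : ∀ z, Mis z = η (Yobs z))
    (Ystar : Ω → I → Option ℝ)
    (hYstar : ∀ z i, Ystar z i = if Mis z i then none else some (Yobs z i))
    (hnull : ∀ i, Y i true = Y i false)   -- Fisher's sharp null
    (G : Ω → (I → Option ℝ) → (I → ℝ))    -- deterministic imputation algorithm
    (H : (I → ℝ) → (I → ℝ))               -- deterministic covariate-adjustment model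
    (res : Ω → (I → Option ℝ) → (I → ℝ))  -- residual vector
    (hres : ∀ z ystar i, res z ystar i = G z ystar i - H (G z ystar) i)
    (T : Ω → (I → ℝ) → ℝ)                 -- test statistic
    (z₀ : Ω)                              -- observed assignment
    (Z : ℕ → Ω' → Ω)                      -- Monte Carlo re-randomization draws
    (hZmeas : ∀ l, Measurable (Z l))
    (hZlaw : ∀ l, μ.map (Z l) = P.toMeasure)             -- identically distributed with law P
    (hZindep : iIndepFun Z μ)   -- independent
    (t : ℝ) (ht : t = T z₀ (res z₀ (Ystar z₀)))          -- observed statistic value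
    (padj : ℝ)
    (hpadj : padj = (P.toMeasure {z | T z (res z (Ystar z)) ≥ t}).toReal)  -- exact p-value
    (phatadj : ℕ → Ω' → ℝ)
    (hphatadj : ∀ L ω, phatadj L ω =
      (1 / (L : ℝ)) * ∑ l ∈ Finset.range L,
        (if T (Z l ω) (res (Z l ω) (Ystar z₀)) ≥ t then (1 : ℝ) else 0)) :
    ∀ ε : ℝ, 0 < ε → ∀ L : ℕ, 1 ≤ L →
      μ {ω | |phatadj L ω - padj| ≥ ε} ≤ ENNReal.ofReal (2 * Real.exp (-2 * L * ε ^ 2)) := by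
  intro ε hε L hL
  -- Under the sharp null the realized outcome vector does not depend on the assignment.
  have hYb : ∀ i b, Y i b = Y i false := by
    intro i b; cases b
    · rfl
    · exact hnull i
  have hYobs_eq : ∀ z, Yobs z = Yobs z₀ := by
    intro z; funext i; rw [hYobs, hYobs, hYb i (arm z i), hYb i (arm z₀ i)]
  have hYstar_eq : ∀ z, Ystar z = Ystar z₀ := by
    intro z; funext i
    rw [hYstar, hYstar, hMis, hMis, hYobs_eq z]
  -- The event, the indicator function, and the true p-value.
  set A : Set Ω := {z | T z (res z (Ystar z₀)) ≥ t} with hA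
  have hAmeas : MeasurableSet A := (Set.to_countable A).measurableSet
  set p : ℝ := (P.toMeasure A).toReal with hpdef
  have hp_eq : padj = p := by
    rw [hpadj]
    congr 2
    ext z
    simp only [Set.mem_setOf_eq, hA, hYstar_eq z]
  have hp0 : 0 ≤ p := ENNReal.toReal_nonneg
  have hp1 : p ≤ 1 := by
    have h1 : P.toMeasure A ≤ 1 := prob_le_one
    simpa [hpdef] using ENNReal.toReal_mono ENNReal.one_ne_top h1
  set f : Ω → ℝ := fun z => if T z (res z (Ystar z₀)) ≥ t then 1 else 0 with hf
  have hfmeas : Measurable f := measurable_of_countable f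
  set W : ℕ → Ω' → ℝ := fun l ω => f (Z l ω) - p with hW
  have hWmeas : ∀ l, Measurable (W l) := fun l => (hfmeas.comp (hZmeas l)).sub_const p
  have hWindep : iIndepFun W μ :=
    hZindep.comp (fun _ z => f z - p) (fun _ => hfmeas.sub_const p)
  -- key pointwise identity for the exponential of the centered indicator
  have hkey : ∀ (s : ℝ) l ω, Real.exp (s * W l ω)
      = Real.exp (-(s * p)) * (1 + (Real.exp s - 1) * f (Z l ω)) := by
    intro s l ω
    by_cases hc : T (Z l ω) (res (Z l ω) (Ystar z₀)) ≥ t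
    · show Real.exp (s * ((if T (Z l ω) (res (Z l ω) (Ystar z₀)) ≥ t then (1:ℝ) else 0) - p))
          = Real.exp (-(s * p)) * (1 + (Real.exp s - 1) *
            (if T (Z l ω) (res (Z l ω) (Ystar z₀)) ≥ t then (1:ℝ) else 0))
      rw [if_pos hc, show s * ((1:ℝ) - p) = s + -(s * p) by ring, Real.exp_add]
      ring
    · show Real.exp (s * ((if T (Z l ω) (res (Z l ω) (Ystar z₀)) ≥ t then (1:ℝ) else 0) - p))
          = Real.exp (-(s * p)) * (1 + (Real.exp s - 1) *
            (if T (Z l ω) (res (Z l ω) (Ystar z₀)) ≥ t then (1:ℝ) else 0))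
      rw [if_neg hc, show s * ((0:ℝ) - p) = -(s * p) by ring]
      ring
  -- expectation of the indicator
  have hBl : ∀ l, μ (Z l ⁻¹' A) = P.toMeasure A := by
    intro l
    rw [← hZlaw l, Measure.map_apply (hZmeas l) hAmeas]
  have hIfun : ∀ l, (fun ω => f (Z l ω)) = (Z l ⁻¹' A).indicator (fun _ => (1:ℝ)) := by
    intro l
    funext ω
    by_cases hc : T (Z l ω) (res (Z l ω) (Ystar z₀)) ≥ t <;>
      simp [hf, hA, Set.indicator_apply, hc]
  have hIf : ∀ l, Integrable (fun ω => f (Z l ω)) μ := by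
    intro l
    rw [hIfun l]
    exact (integrable_const (1:ℝ)).indicator ((hZmeas l) hAmeas)
  have hEf : ∀ l, ∫ ω, f (Z l ω) ∂μ = p := by
    intro l
    rw [hIfun l, MeasureTheory.integral_indicator_const (1:ℝ) ((hZmeas l) hAmeas), measureReal_def, hBl l]
    simp [hpdef]
  -- integrability of the exponentials
  have hint : ∀ l (s : ℝ), Integrable (fun ω => Real.exp (s * W l ω)) μ := by
    intro l s
    have : (fun ω => Real.exp (s * W l ω))
        = fun ω => Real.exp (-(s * p)) * (1 + (Real.exp s - 1) * f (Z l ω)) := by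
      funext ω; exact hkey s l ω
    rw [this]
    exact (((integrable_const (1:ℝ)).add ((hIf l).const_mul _)).const_mul _)
  -- mgf bound via Hoeffding's lemma
  have hmgf : ∀ l (s : ℝ), mgf (W l) μ s ≤ Real.exp (s ^ 2 / 8) := by
    intro l s
    have hcalc : mgf (W l) μ s = Real.exp (-(s * p)) * (1 - p + p * Real.exp s) := by
      rw [mgf]
      calc ∫ ω, Real.exp (s * W l ω) ∂μ
          = ∫ ω, Real.exp (-(s * p)) * (1 + (Real.exp s - 1) * f (Z l ω)) ∂μ := by
            congr 1; funext ω; exact hkey s l ω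
        _ = Real.exp (-(s * p)) * ∫ ω, (1 + (Real.exp s - 1) * f (Z l ω)) ∂μ :=
            integral_const_mul _ _
        _ = Real.exp (-(s * p)) * (1 + (Real.exp s - 1) * p) := by
            rw [integral_add (integrable_const 1) ((hIf l).const_mul _),
              integral_const, integral_const_mul, hEf l]
            simp
        _ = Real.exp (-(s * p)) * (1 - p + p * Real.exp s) := by ring
    rw [hcalc]
    have hb := bernoulli_mgf_le' hp0 hp1 s
    calc Real.exp (-(s * p)) * (1 - p + p * Real.exp s)
        ≤ Real.exp (-(s * p)) * Real.exp (p * s + s ^ 2 / 8) :=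
          mul_le_mul_of_nonneg_left hb (Real.exp_pos _).le
      _ = Real.exp (s ^ 2 / 8) := by rw [← Real.exp_add]; congr 1; ring
  -- the negated variables, for the lower tail
  set W' : ℕ → Ω' → ℝ := fun l => -(W l) with hW'
  have hW'meas : ∀ l, Measurable (W' l) := fun l => (hWmeas l).neg
  have hW'indep : iIndepFun W' μ :=
    hZindep.comp (fun _ z => -(f z - p)) (fun _ => (hfmeas.sub_const p).neg)
  have hW'int : ∀ l (s : ℝ), Integrable (fun ω => Real.exp (s * W' l ω)) μ := by
    intro l s
    have : (fun ω => Real.exp (s * W' l ω)) = fun ω => Real.exp ((-s) * W l ω) := by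
      funext ω; simp only [hW', Pi.neg_apply]; congr 1; ring
    rw [this]; exact hint l (-s)
  have hW'mgf : ∀ l (s : ℝ), mgf (W' l) μ s ≤ Real.exp (s ^ 2 / 8) := by
    intro l s
    rw [hW', mgf_neg]
    calc mgf (W l) μ (-s) ≤ Real.exp ((-s) ^ 2 / 8) := hmgf l (-s)
      _ = Real.exp (s ^ 2 / 8) := by rw [neg_pow]; norm_num
  -- two-sided bound via a union bound
  have hLpos : (0:ℝ) < L := by exact_mod_cast Nat.lt_of_lt_of_le Nat.zero_lt_one hL
  have hsub : {ω | |phatadj L ω - padj| ≥ ε}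
      ⊆ {ω | (L : ℝ) * ε ≤ (∑ l ∈ Finset.range L, W l) ω}
        ∪ {ω | (L : ℝ) * ε ≤ (∑ l ∈ Finset.range L, W' l) ω} := by
    intro ω hω
    simp only [Set.mem_setOf_eq, ge_iff_le] at hω
    have hsum : (∑ l ∈ Finset.range L, W l) ω
        = (∑ l ∈ Finset.range L, f (Z l ω)) - L * p := by
      simp [hW, Finset.sum_apply, Finset.sum_sub_distrib]
    have hphat : phatadj L ω - padj = (1 / (L:ℝ)) * (∑ l ∈ Finset.range L, W l) ω := by
      have hfeq : ∀ l, (if T (Z l ω) (res (Z l ω) (Ystar z₀)) ≥ t then (1:ℝ) else 0)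
          = f (Z l ω) := fun l => rfl
      rw [hphatadj, hp_eq, hsum]
      simp only [hfeq]
      have hLne : (L:ℝ) ≠ 0 := hLpos.ne'
      field_simp
    rcases le_abs.mp hω with h | h
    · left
      simp only [Set.mem_setOf_eq]
      rw [hphat] at h
      calc (L:ℝ) * ε ≤ (L:ℝ) * ((1 / (L:ℝ)) * (∑ l ∈ Finset.range L, W l) ω) := by
            exact mul_le_mul_of_nonneg_left h hLpos.le
        _ = (∑ l ∈ Finset.range L, W l) ω := by field_simp
    · right
      simp only [Set.mem_setOf_eq]
      rw [hphat] at h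
      have hsum' : (∑ l ∈ Finset.range L, W' l) ω = -((∑ l ∈ Finset.range L, W l) ω) := by
        simp [hW', Finset.sum_apply]
      rw [hsum']
      calc (L:ℝ) * ε ≤ (L:ℝ) * -((1 / (L:ℝ)) * (∑ l ∈ Finset.range L, W l) ω) := by
            exact mul_le_mul_of_nonneg_left h hLpos.le
        _ = -((∑ l ∈ Finset.range L, W l) ω) := by field_simp
  have hup := chernoff_upper_aux μ W hWmeas hWindep hint hmgf hε L
  have hlo := chernoff_upper_aux μ W' hW'meas hW'indep hW'int hW'mgf hε L
  have hb1 : μ {ω | (L : ℝ) * ε ≤ (∑ l ∈ Finset.range L, W l) ω}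
      ≤ ENNReal.ofReal (Real.exp (-2 * L * ε ^ 2)) := by
    rw [← ENNReal.ofReal_toReal (measure_ne_top μ _)]
    exact ENNReal.ofReal_le_ofReal hup
  have hb2 : μ {ω | (L : ℝ) * ε ≤ (∑ l ∈ Finset.range L, W' l) ω}
      ≤ ENNReal.ofReal (Real.exp (-2 * L * ε ^ 2)) := by
    rw [← ENNReal.ofReal_toReal (measure_ne_top μ _)]
    exact ENNReal.ofReal_le_ofReal hlo
  calc μ {ω | |phatadj L ω - padj| ≥ ε}
      ≤ μ ({ω | (L : ℝ) * ε ≤ (∑ l ∈ Finset.range L, W l) ω}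
        ∪ {ω | (L : ℝ) * ε ≤ (∑ l ∈ Finset.range L, W' l) ω}) := measure_mono hsub
    _ ≤ μ {ω | (L : ℝ) * ε ≤ (∑ l ∈ Finset.range L, W l) ω}
        + μ {ω | (L : ℝ) * ε ≤ (∑ l ∈ Finset.range L, W' l) ω} := measure_union_le _ _
    _ ≤ ENNReal.ofReal (Real.exp (-2 * L * ε ^ 2))
        + ENNReal.ofReal (Real.exp (-2 * L * ε ^ 2)) := add_le_add hb1 hb2
    _ = ENNReal.ofReal (2 * Real.exp (-2 * L * ε ^ 2)) := by
        rw [← ENNReal.ofReal_add (Real.exp_pos _).le (Real.exp_pos _).le]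
        congr 1; ring
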